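/- For every real c > 0 there exists an integer k′ such that for every integer k ≥ k′, taking n = ⌈c·k³⌉, there exists an (n, k, 1/√k)-bisector of size at most 6·k·e^{√k}·ln(c·k). -/

import Mathlib

open Finset


lemma exp_neg_quad {u : ℝ} (h0 : 0 ≤ u) (h1 : u ≤ 1/50) :
    Real.exp (-(u + 0.52*u^2)) ≤ 1 - u := by
  have hu2 : (0:ℝ) ≤ u^2 := sq_nonneg u
  have e3 : u^3 ≤ u^2 * (1/50) := by nlinarith [mul_nonneg hu2 (sub_nonneg.mpr h1)]
  have e4 : u^4 ≤ u^2 * (1/50)^2 := by nlinarith [mul_nonneg (mul_nonneg hu2 h0) (sub_nonneg.mpr h1), mul_nonneg hu2 (sub_nonneg.mpr h1)]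
  have e5 : u^5 ≤ u^2 * (1/50)^3 := by nlinarith [mul_nonneg (mul_nonneg (mul_nonneg hu2 h0) h0) (sub_nonneg.mpr h1), mul_nonneg (mul_nonneg hu2 h0) (sub_nonneg.mpr h1), mul_nonneg hu2 (sub_nonneg.mpr h1)]
  have e6 : u^6 ≤ u^2 * (1/50)^4 := by nlinarith [mul_nonneg (mul_nonneg (mul_nonneg (mul_nonneg hu2 h0) h0) h0) (sub_nonneg.mpr h1), mul_nonneg (mul_nonneg (mul_nonneg hu2 h0) h0) (sub_nonneg.mpr h1), mul_nonneg (mul_nonneg hu2 h0) (sub_nonneg.mpr h1), mul_nonneg hu2 (sub_nonneg.mpr h1)]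
  set v : ℝ := u + 0.52*u^2 with hv
  have hv0 : 0 ≤ v := by rw [hv]; nlinarith
  have hv1 : v ≤ 1 := by rw [hv]; nlinarith
  have habs : |(-v)| ≤ 1 := by rw [abs_neg, abs_of_nonneg hv0]; exact hv1
  have hb := Real.exp_bound habs (by norm_num : 0 < 3)
  have hsum : ∑ i ∈ Finset.range 3, (-v) ^ i / (Nat.factorial i : ℝ)
      = 1 - v + v^2/2 := by
    simp [Finset.sum_range_succ, Nat.factorial]
    ring
  rw [hsum] at hb
  have habs3 : |(-v)| ^ 3 = v^3 := by rw [abs_neg, abs_of_nonneg hv0]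
  rw [habs3] at hb
  have hle : Real.exp (-v) ≤ 1 - v + v^2/2 + v^3 * (2/9) := by
    have h2 := (abs_le.mp hb).2
    norm_num [Nat.factorial] at h2
    linarith
  have hfin : 1 - v + v^2/2 + v^3 * (2/9) ≤ 1 - u := by
    rw [hv]; ring_nf; nlinarith [e3, e4, e5, e6]
  linarith


lemma choose_identity {n k M : ℕ} (h : M + k ≤ n) :
    n.choose k * (n-k).choose M = n.choose M * (n-M).choose k := by
  have h1 := Nat.choose_mul (n := n) (k := k+M) (show k ≤ k+M by omega)
  have h2 := Nat.choose_mul (n := n) (k := k+M) (show M ≤ k+M by omega)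
  rw [Nat.add_sub_cancel_left] at h1
  rw [Nat.add_sub_cancel] at h2
  rw [← h1, ← h2, Nat.choose_symm_add]

lemma choose_ratio {n k M : ℕ} (h : M + k + 1 ≤ n) :
    (n.choose M : ℝ) * (1 - ((M:ℝ)+k)/(n:ℝ))^k ≤ ((n-k).choose M : ℝ) := by
  have hn0 : 0 < n := by omega
  have hnR : (0:ℝ) < n := by exact_mod_cast hn0
  have hMk : (M:ℝ) + k + 1 ≤ n := by exact_mod_cast h
  have hu1 : 1 - ((M:ℝ)+k)/(n:ℝ) = ((n:ℝ) - M - k)/n := by field_simp; ring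
  have hu0 : (0:ℝ) ≤ 1 - ((M:ℝ)+k)/(n:ℝ) := by
    rw [hu1]; apply div_nonneg _ hnR.le; linarith
  -- product inequality
  have hP : (1 - ((M:ℝ)+k)/(n:ℝ))^k * (n.descFactorial k : ℝ)
      ≤ ((n-M).descFactorial k : ℝ) := by
    rw [Nat.descFactorial_eq_prod_range, Nat.descFactorial_eq_prod_range]
    push_cast [Nat.cast_prod]
    have hpc : (1 - ((M:ℝ)+k)/(n:ℝ))^k = ∏ _i ∈ Finset.range k, (1 - ((M:ℝ)+k)/(n:ℝ)) := by
      rw [Finset.prod_const, Finset.card_range]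
    rw [hpc, ← Finset.prod_mul_distrib]
    apply Finset.prod_le_prod
    · intro i hi
      apply mul_nonneg hu0
      have : (i:ℝ) ≤ n := by
        rw [Finset.mem_range] at hi
        have : (i:ℝ) < k := by exact_mod_cast hi
        linarith
      have hc : ((n - i : ℕ):ℝ) = (n:ℝ) - i := by
        rw [Nat.cast_sub (by rw [Finset.mem_range] at hi; omega)]
      rw [hc]; linarith
    · intro i hi
      rw [Finset.mem_range] at hi
      have hiR : (i:ℝ) < k := by exact_mod_cast hi
      have hc1 : ((n - i : ℕ):ℝ) = (n:ℝ) - i := by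
        rw [Nat.cast_sub (by omega)]
      have hc2 : ((n - M - i : ℕ):ℝ) = (n:ℝ) - M - i := by
        rw [Nat.sub_sub, Nat.cast_sub (by omega)]
        push_cast; ring
      rw [hc1, hc2, hu1, div_mul_eq_mul_div, div_le_iff₀ hnR]
      have hkR : (0:ℝ) ≤ k := by positivity
      have hiR0 : (0:ℝ) ≤ i := by positivity
      have hMR0 : (0:ℝ) ≤ M := by positivity
      nlinarith [mul_le_mul hiR.le (show (M:ℝ) + k ≤ n by linarith) (by linarith) hkR]
  -- convert descFactorial to choose
  have hdf1 : ((n-M).descFactorial k : ℝ) = (k.factorial : ℝ) * ((n-M).choose k : ℝ) := by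
    exact_mod_cast congrArg (Nat.cast (R := ℝ)) (Nat.descFactorial_eq_factorial_mul_choose (n-M) k)
  have hdf2 : (n.descFactorial k : ℝ) = (k.factorial : ℝ) * (n.choose k : ℝ) := by
    exact_mod_cast congrArg (Nat.cast (R := ℝ)) (Nat.descFactorial_eq_factorial_mul_choose n k)
  rw [hdf1, hdf2] at hP
  have hfac : (0:ℝ) < (k.factorial : ℝ) := by exact_mod_cast k.factorial_pos
  have hP2 : (1 - ((M:ℝ)+k)/(n:ℝ))^k * (n.choose k : ℝ) ≤ ((n-M).choose k : ℝ) := by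
    have := hP
    nlinarith [this]
  have hid : (n.choose k : ℝ) * ((n-k).choose M : ℝ) = (n.choose M : ℝ) * ((n-M).choose k : ℝ) := by
    exact_mod_cast congrArg (Nat.cast (R := ℝ)) (choose_identity (by omega : M + k ≤ n))
  have hCk : (0:ℝ) < (n.choose k : ℝ) := by
    exact_mod_cast Nat.choose_pos (by omega : k ≤ n)
  rw [← mul_le_mul_iff_right₀ hCk]
  calc (n.choose k : ℝ) * ((n.choose M : ℝ) * (1 - ((M:ℝ)+k)/(n:ℝ))^k)
      = (n.choose M : ℝ) * ((1 - ((M:ℝ)+k)/(n:ℝ))^k * (n.choose k : ℝ)) := by ring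
    _ ≤ (n.choose M : ℝ) * ((n-M).choose k : ℝ) := by
        apply mul_le_mul_of_nonneg_left hP2 (by positivity)
    _ = (n.choose k : ℝ) * ((n-k).choose M : ℝ) := hid.symm
  


lemma exists_good_family (n k M t : ℕ)
    (h : (n.choose k) * ((n.choose M) - ((n-k).choose M)) ^ t < (n.choose M) ^ t) :
    ∃ F : Finset (Fin n → Fin 2), F.card ≤ t ∧
      (∀ f ∈ F, (Finset.univ.filter fun x => f x = 1).card = M) ∧
      ∀ S : Finset (Fin n), S.card = k → ∃ f ∈ F, ∀ x ∈ S, f x = 0 := by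
  classical
  set Ω : Finset (Finset (Fin n)) := Finset.univ.powersetCard M with hΩdef
  have hΩcard : Ω.card = n.choose M := by
    simp [hΩdef, Finset.card_powersetCard]
  set Bad : Finset (Fin n) → Finset (Finset (Fin n)) :=
    fun S => Ω.filter (fun A => ¬ Disjoint A S) with hBaddef
  have hBadcard : ∀ S : Finset (Fin n), S.card = k →
      (Bad S).card = n.choose M - (n-k).choose M := by
    intro S hS
    have hdisj : ∀ A : Finset (Fin n), Disjoint A S ↔ A ⊆ Sᶜ := by
      intro A
      simp [Finset.disjoint_left, Finset.subset_iff]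
    have hgood : Ω.filter (fun A => Disjoint A S) = Sᶜ.powersetCard M := by
      ext A
      simp only [hΩdef, Finset.mem_filter, Finset.mem_powersetCard, Finset.subset_univ,
        true_and, hdisj]
      tauto
    have hgoodcard : (Ω.filter (fun A => Disjoint A S)).card = (n-k).choose M := by
      rw [hgood, Finset.card_powersetCard, Finset.card_compl, hS, Fintype.card_fin]
    have hsplit := Finset.card_filter_add_card_filter_not
      (s := Ω) (p := fun A => Disjoint A S)
    show (Ω.filter (fun A => ¬ Disjoint A S)).card = n.choose M - (n-k).choose M
    omega
  set T : Finset (Fin t → Finset (Fin n)) := Fintype.piFinset (fun _ => Ω) with hTdef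
  have hTcard : T.card = (n.choose M) ^ t := by
    simp [hTdef, Fintype.card_piFinset, hΩcard]
  set U : Finset (Fin t → Finset (Fin n)) :=
    (Finset.univ.powersetCard k).biUnion
      (fun S => Fintype.piFinset (fun _ => Bad S)) with hUdef
  have hUcard : U.card ≤ (n.choose k) * ((n.choose M) - ((n-k).choose M)) ^ t := by
    refine (Finset.card_biUnion_le).trans ?_
    have : ∀ S ∈ Finset.univ.powersetCard k,
        (Fintype.piFinset (fun _ : Fin t => Bad S)).card
          = ((n.choose M) - ((n-k).choose M)) ^ t := by
      intro S hS
      rw [Finset.mem_powersetCard_univ] at hS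
      simp [Fintype.card_piFinset, hBadcard S hS]
    rw [Finset.sum_congr rfl this, Finset.sum_const, Finset.card_powersetCard,
      Finset.card_univ, Fintype.card_fin, smul_eq_mul]
  have hUT : U.card < T.card := by omega
  have hnotsub : ¬ T ⊆ U := fun hsub => absurd (Finset.card_le_card hsub) (by omega)
  obtain ⟨g, hgT, hgU⟩ := Finset.not_subset.mp hnotsub
  have hgΩ : ∀ i, g i ∈ Ω := Fintype.mem_piFinset.mp hgT
  have hgM : ∀ i, (g i).card = M := by
    intro i
    have := hgΩ i
    rw [hΩdef, Finset.mem_powersetCard_univ] at this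
    exact this
  refine ⟨Finset.univ.image (fun i : Fin t => fun x => if x ∈ g i then (1 : Fin 2) else 0),
    ?_, ?_, ?_⟩
  · exact (Finset.card_image_le).trans (by simp)
  · intro f hf
    obtain ⟨i, _, rfl⟩ := Finset.mem_image.mp hf
    have : (Finset.univ.filter fun x => (if x ∈ g i then (1 : Fin 2) else 0) = 1) = g i := by
      ext x
      by_cases hx : x ∈ g i <;> simp [hx]
    rw [this, hgM i]
  · intro S hS
    have hSU : S ∈ Finset.univ.powersetCard k := by
      rw [Finset.mem_powersetCard_univ]; exact hS
    have : g ∉ Fintype.piFinset (fun _ : Fin t => Bad S) := by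
      intro hmem
      exact hgU (Finset.mem_biUnion.mpr ⟨S, hSU, hmem⟩)
    rw [Fintype.mem_piFinset] at this
    push_neg at this
    obtain ⟨i, hi⟩ := this
    have hdisj : Disjoint (g i) S := by
      by_contra hnd
      exact hi (Finset.mem_filter.mpr ⟨hgΩ i, hnd⟩)
    refine ⟨_, Finset.mem_image_of_mem _ (Finset.mem_univ i), ?_⟩
    intro x hx
    have hxg : x ∉ g i := Finset.disjoint_right.mp hdisj hx
    simp [hxg]

lemma sqrt_ge_100 {s k : ℝ} (h : s*s = k) (hk : 10000 ≤ k) (hs : 0 ≤ s) : 100 ≤ s := by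
  nlinarith


lemma he06 : Real.exp 0.6 ≤ 1.83 := by
  by_contra hcon
  push_neg at hcon
  have h1 : (1.83:ℝ)^5 < (Real.exp 0.6)^5 := by
    apply pow_lt_pow_left₀ hcon (by norm_num) (by norm_num)
  have h2 : (Real.exp 0.6)^5 = Real.exp 1 ^ 3 := by
    rw [← Real.exp_nat_mul, ← Real.exp_nat_mul]; norm_num
  have h3 : Real.exp 1 ^ 3 < 2.7182818286^3 := by
    apply pow_lt_pow_left₀ Real.exp_one_lt_d9 (Real.exp_pos 1).le (by norm_num)
  rw [h2] at h1
  norm_num at h1 h3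
  linarith

/-- An `(n,k,α)`-bisector: every function maps exactly `⌈α·n⌉` elements to `1`,
and every `k`-subset of `[n]` is mapped entirely to `0` by some function. -/
def IsBisector (n k : ℕ) (α : ℝ) (F : Finset (Fin n → Fin 2)) : Prop :=
  (∀ f ∈ F, (Finset.univ.filter fun x => f x = 1).card = ⌈α * (n : ℝ)⌉₊) ∧
  ∀ S : Finset (Fin n), S.card = k → ∃ f ∈ F, ∀ x ∈ S, f x = 0

set_option maxHeartbeats 1000000 in
/-- For every `c > 0` there is `k'` such that for all `k ≥ k'`, with `n = ⌈c·k³⌉`,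
there is an `(n, k, 1/√k)`-bisector of size at most `6·k·e^{√k}·ln(c·k)`. -/
theorem bisector_small_universe (c : ℝ) (hc : 0 < c) :
    ∃ k' : ℕ, ∀ k : ℕ, k' ≤ k →
      ∃ F : Finset (Fin ⌈c * (k : ℝ) ^ 3⌉₊ → Fin 2),
        IsBisector ⌈c * (k : ℝ) ^ 3⌉₊ k (1 / Real.sqrt k) F ∧
          (F.card : ℝ) ≤
            6 * (k : ℝ) * Real.exp (Real.sqrt k) * Real.log (c * (k : ℝ)) := by
  set d : ℝ := max 1 c⁻¹ with hd
  have hd1 : (1:ℝ) ≤ d := le_max_left _ _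
  have hdc : c⁻¹ ≤ d := le_max_right _ _
  have hd0 : (0:ℝ) < d := lt_of_lt_of_le one_pos hd1
  refine ⟨⌈(10001:ℝ) + 101*d + Real.exp 3 * d^9⌉₊, ?_⟩
  intro k hk
  simp only [IsBisector]
  have hkR : ((10001:ℝ) + 101*d + Real.exp 3 * d^9) ≤ (k:ℝ) :=
    (Nat.le_ceil _).trans (by exact_mod_cast hk)
  have hd9 : (0:ℝ) ≤ Real.exp 3 * d^9 := by positivity
  have hk1 : (10000:ℝ) ≤ (k:ℝ) := by linarith
  have hk0 : (0:ℝ) < (k:ℝ) := by linarith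
  have hk1' : (1:ℝ) ≤ (k:ℝ) := by linarith
  have hkk : (k:ℝ) ≤ (k:ℝ)^2 := by
    calc (k:ℝ) = k^1 := (pow_one _).symm
      _ ≤ k^2 := pow_le_pow_right₀ hk1' (by norm_num)
  have hk2pos : (0:ℝ) < (k:ℝ)^2 := by positivity
  have hk100d : 100*d ≤ (k:ℝ) := by linarith
  have hkexp : Real.exp 3 * d^9 ≤ (k:ℝ) := by linarith
  have hcd : (1:ℝ) ≤ c*d := by
    have := mul_le_mul_of_nonneg_left hdc hc.le
    rwa [mul_inv_cancel₀ hc.ne'] at this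
  -- c*k bounds
  have hck100 : (100:ℝ) ≤ c*k := by
    have h1 : c * (100*d) ≤ c * k := mul_le_mul_of_nonneg_left hk100d hc.le
    have h2 : c*(100*d) = 100*(c*d) := by ring
    rw [h2] at h1
    linarith
  have hck0 : (0:ℝ) < c*k := by linarith
  have hckexp : Real.exp 3 * d^8 ≤ c*k := by
    have h1 : c * (Real.exp 3 * d^9) ≤ c * k := mul_le_mul_of_nonneg_left hkexp hc.le
    have h2 : c * (Real.exp 3 * d^9) = Real.exp 3 * d^8 * (c*d) := by ring
    rw [h2] at h1
    have h3 := mul_le_mul_of_nonneg_left hcd (by positivity : (0:ℝ) ≤ Real.exp 3 * d^8)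
    rw [mul_one] at h3
    linarith
  set L : ℝ := Real.log (c*k) with hLdef
  set D : ℝ := Real.log d with hDdef
  have hD0 : 0 ≤ D := Real.log_nonneg hd1
  have hL : 3 + 8*D ≤ L := by
    have h1 : Real.log (Real.exp 3 * d^8) ≤ L := Real.log_le_log (by positivity) hckexp
    rw [Real.log_mul (by positivity) (by positivity), Real.log_exp, Real.log_pow] at h1
    push_cast at h1
    linarith
  have hL3 : 3 ≤ L := by linarith
  -- n bounds
  set n : ℕ := ⌈c * (k:ℝ)^3⌉₊ with hn
  have hnlow : c*(k:ℝ)^3 ≤ (n:ℝ) := Nat.le_ceil _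
  have hnhigh : (n:ℝ) ≤ c*(k:ℝ)^3 + 1 := (Nat.ceil_lt_add_one (by positivity)).le
  have hn100k2 : 100*(k:ℝ)^2 ≤ (n:ℝ) := by
    have h1 := mul_le_mul_of_nonneg_right hck100 (sq_nonneg (k:ℝ))
    have h2 : (c*k)*(k:ℝ)^2 = c*(k:ℝ)^3 := by ring
    rw [h2] at h1
    linarith
  have hnR0 : (0:ℝ) < (n:ℝ) := by linarith
  have hn1 : (1:ℝ) ≤ (n:ℝ) := by linarith
  have hn2ck3 : (n:ℝ) ≤ 2*(c*(k:ℝ)^3) := by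
    have h1 := mul_le_mul_of_nonneg_right hck100 (sq_nonneg (k:ℝ))
    have h2 : (c*k)*(k:ℝ)^2 = c*(k:ℝ)^3 := by ring
    rw [h2] at h1
    linarith
  -- sqrt facts
  set s : ℝ := Real.sqrt k with hsdef
  have hs : s*s = (k:ℝ) := Real.mul_self_sqrt hk0.le
  have hs0 : 0 < s := Real.sqrt_pos.mpr hk0
  have hs100 : 100 ≤ s := sqrt_ge_100 hs hk1 hs0.le
  -- M bounds
  set M : ℕ := ⌈(1 / Real.sqrt (k:ℝ)) * (n:ℝ)⌉₊ with hM
  have hM1 : (M:ℝ) ≤ (n:ℝ)/s + 1 := by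
    have h1 : (M:ℝ) < (1/s) * n + 1 := by
      rw [hM]
      exact Nat.ceil_lt_add_one (by positivity)
    rw [one_div, inv_mul_eq_div] at h1
    linarith
  have hM0 : (0:ℝ) ≤ M := Nat.cast_nonneg M
  clear_value M
  clear_value n
  -- M + k + 1 ≤ n
  have hns : (n:ℝ)/s ≤ (n:ℝ)/100 := by
    rw [div_le_div_iff₀ hs0 (by norm_num)]
    have := mul_le_mul_of_nonneg_left hs100 hnR0.le
    linarith
  have hn100 : (k:ℝ)^2 ≤ (n:ℝ)/100 := by linarith
  have hMknR : (M:ℝ) + k + 2 ≤ (n:ℝ) := by linarith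
  have hMkn : M + k + 1 ≤ n := by
    have : ((M + k + 1 : ℕ):ℝ) ≤ (n:ℝ) := by push_cast; linarith
    exact_mod_cast this
  -- u facts
  set u : ℝ := ((M:ℝ)+k)/(n:ℝ) with hu
  have hu0 : 0 ≤ u := by positivity
  set w : ℝ := 1/s + 1/(50*(k:ℝ)) with hw
  have hw0 : 0 ≤ w := by positivity
  have h50 : (k:ℝ)+1 ≤ (n:ℝ)/(50*(k:ℝ)) := by
    rw [le_div_iff₀ (by positivity)]
    linarith [hkk, hn100k2, hk1']
  have hu_le : u ≤ w := by
    rw [hu, hw, div_le_iff₀ hnR0]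
    have e1 : (1/s + 1/(50*(k:ℝ))) * n = n/s + n/(50*(k:ℝ)) := by ring
    rw [e1]
    linarith
  have hw95 : w ≤ 1/95 := by
    rw [hw]
    have e1 : 1/s ≤ 1/100 := by
      apply one_div_le_one_div_of_le (by norm_num) hs100
    have e2 : 1/(50*(k:ℝ)) ≤ 1/500000 := by
      apply one_div_le_one_div_of_le (by norm_num)
      linarith
    linarith
  have hu50 : u ≤ 1/50 := by
    have := hu_le.trans hw95
    linarith
  have hks : (k:ℝ)/s = s := by rw [div_eq_iff hs0.ne']; linarith [hs]
  have hkw : (k:ℝ)*w = s + 1/50 := by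
    rw [hw]
    have e1 : (k:ℝ) * (1/s + 1/(50*(k:ℝ))) = k/s + k/(50*k) := by ring
    have e2 : (k:ℝ)/(50*k) = 1/50 := by
      rw [div_eq_iff (by positivity)]; ring
    rw [e1, e2, hks]
  have hsw : s*w = 1 + s/(50*(k:ℝ)) := by
    rw [hw]
    have e1 : s * (1/s + 1/(50*(k:ℝ))) = s/s + s/(50*k) := by ring
    rw [e1, div_self hs0.ne']
  have hsk50 : s/(50*(k:ℝ)) ≤ 1/5000 := by
    rw [div_le_div_iff₀ (by positivity) (by norm_num)]
    have := mul_le_mul_of_nonneg_left hs100 hs0.le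
    linarith [hs]
  have hkw2 : (k:ℝ)*w^2 ≤ 1.001 := by
    have e1 : (k:ℝ)*w^2 = ((k:ℝ)*w)*w := by ring
    rw [e1, hkw]
    have e3 : (s + 1/50)*w = s*w + w*(1/50) := by ring
    rw [e3, hsw]
    linarith
  have hE4 : (k:ℝ) * (u + 0.52*u^2) ≤ s + 0.6 := by
    have e1 : (k:ℝ)*u ≤ (k:ℝ)*w := mul_le_mul_of_nonneg_left hu_le hk0.le
    have e2 : u^2 ≤ w^2 := by
      rw [sq, sq]; exact mul_self_le_mul_self hu0 hu_le
    have e3 : (k:ℝ)*u^2 ≤ (k:ℝ)*w^2 := mul_le_mul_of_nonneg_left e2 hk0.le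
    have e4 : (k:ℝ)*(u + 0.52*u^2) = k*u + 0.52*(k*u^2) := by ring
    have e5 : (k:ℝ)*u ≤ s + 1/50 := by rw [← hkw]; exact e1
    have e6 : (k:ℝ)*u^2 ≤ 1.001 := e3.trans hkw2
    rw [e4]
    linarith [e5, e6]
  -- ratio bound
  set A : ℝ := (((n-k).choose M : ℕ) : ℝ) with hA
  set B : ℝ := ((n.choose M : ℕ) : ℝ) with hB
  have hA0 : (0:ℝ) < A := by
    rw [hA]
    exact_mod_cast Nat.choose_pos (by omega : M ≤ n - k)
  have hB0 : (0:ℝ) < B := by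
    rw [hB]
    exact_mod_cast Nat.choose_pos (by omega : M ≤ n)
  have hABnat : (n-k).choose M ≤ n.choose M := Nat.choose_le_choose M (by omega)
  have hBA : A ≤ B := by rw [hA, hB]; exact_mod_cast hABnat
  have hpow : Real.exp (-(s+0.6)) ≤ (1-u)^k := by
    calc Real.exp (-(s+0.6)) ≤ Real.exp ((k:ℝ) * -(u + 0.52*u^2)) := by
          apply Real.exp_le_exp.mpr
          have : (k:ℝ) * -(u + 0.52*u^2) = -((k:ℝ)*(u + 0.52*u^2)) := by ring
          rw [this]
          linarith
      _ = Real.exp (-(u + 0.52*u^2)) ^ k := Real.exp_nat_mul _ k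
      _ ≤ (1-u)^k := pow_le_pow_left₀ (Real.exp_pos _).le (exp_neg_quad hu0 hu50) k
  have hratio : B * Real.exp (-(s+0.6)) ≤ A := by
    calc B * Real.exp (-(s+0.6)) ≤ B * (1-u)^k :=
          mul_le_mul_of_nonneg_left hpow hB0.le
      _ ≤ A := choose_ratio hMkn
  -- define t
  set y : ℝ := ((k:ℝ) * Real.log n) * (B/A) with hy
  have hlogn0 : 0 ≤ Real.log n := Real.log_nonneg hn1
  have hy0 : 0 ≤ y := by positivity
  set t : ℕ := ⌊y⌋₊ + 1 with ht
  have ht_lb : y < (t:ℝ) := by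
    rw [ht]; push_cast; exact Nat.lt_floor_add_one y
  have ht_ub : (t:ℝ) ≤ y + 1 := by
    rw [ht]; push_cast
    have := Nat.floor_le hy0
    linarith
  -- counting condition
  have hmain : (n.choose k) * ((n.choose M) - ((n-k).choose M)) ^ t < (n.choose M) ^ t := by
    rw [← Nat.cast_lt (α := ℝ)]
    push_cast [Nat.cast_sub hABnat]
    have hBA' : B - A ≤ B * Real.exp (-(A/B)) := by
      have h1 : 1 - A/B ≤ Real.exp (-(A/B)) := Real.one_sub_le_exp_neg _
      calc B - A = B * (1 - A/B) := by field_simp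
        _ ≤ B * Real.exp (-(A/B)) := mul_le_mul_of_nonneg_left h1 hB0.le
    have hBA0 : (0:ℝ) ≤ B - A := by linarith
    have hCle : ((n.choose k : ℕ):ℝ) ≤ (n:ℝ)^k := by
      exact_mod_cast Nat.choose_le_pow n k
    have hp1 : (B - A)^t ≤ (B * Real.exp (-(A/B)))^t := pow_le_pow_left₀ hBA0 hBA' t
    have hnexp : (n:ℝ)^k = Real.exp ((k:ℝ) * Real.log n) := by
      rw [Real.exp_nat_mul, Real.exp_log hnR0]
    have hAB_gt : (k:ℝ) * Real.log n < (t:ℝ) * (A/B) := by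
      have h1 : y * (A/B) < (t:ℝ) * (A/B) := by
        apply mul_lt_mul_of_pos_right ht_lb (by positivity)
      have h2 : y * (A/B) = (k:ℝ) * Real.log n * ((B/A) * (A/B)) := by rw [hy]; ring
      have h3 : (B/A) * (A/B) = 1 := by field_simp
      rw [h2, h3, mul_one] at h1
      exact h1
    calc ((n.choose k : ℕ):ℝ) * (B - A)^t
        ≤ (n:ℝ)^k * (B * Real.exp (-(A/B)))^t := by
          apply mul_le_mul hCle hp1 (by positivity) (by positivity)
      _ = Real.exp ((k:ℝ) * Real.log n) * (B^t * Real.exp ((t:ℝ) * -(A/B))) := by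
          rw [mul_pow, hnexp, ← Real.exp_nat_mul]
      _ = B^t * (Real.exp ((k:ℝ) * Real.log n) * Real.exp ((t:ℝ) * -(A/B))) := by ring
      _ = B^t * Real.exp ((k:ℝ) * Real.log n + (t:ℝ) * -(A/B)) := by rw [Real.exp_add]
      _ < B^t * 1 := by
          apply mul_lt_mul_of_pos_left _ (by positivity)
          rw [← Real.exp_zero]
          apply Real.exp_lt_exp.mpr
          linarith [hAB_gt]
      _ = B^t := mul_one _
  obtain ⟨F, hFcard, hFones, hFcover⟩ := exists_good_family n k M t hmain
  refine ⟨F, ⟨hFones, hFcover⟩, ?_⟩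
  -- size bound
  have hcard : (F.card : ℝ) ≤ (t:ℝ) := by exact_mod_cast hFcard
  have hBAexp : B/A ≤ Real.exp (s+0.6) := by
    rw [div_le_iff₀ hA0]
    have h1 : (B * Real.exp (-(s+0.6))) * Real.exp (s+0.6) ≤ A * Real.exp (s+0.6) :=
      mul_le_mul_of_nonneg_right hratio (Real.exp_pos _).le
    have h2 : (B * Real.exp (-(s+0.6))) * Real.exp (s+0.6) = B := by
      have e0 : -(s+0.6) + (s+0.6) = 0 := by ring
      rw [mul_assoc, ← Real.exp_add, e0, Real.exp_zero, mul_one]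
    linarith
  have hyle : y ≤ (k:ℝ) * Real.log n * Real.exp (s+0.6) := by
    rw [hy]
    apply mul_le_mul_of_nonneg_left hBAexp (by positivity)
  have hexpadd : Real.exp (s+0.6) = Real.exp s * Real.exp 0.6 := Real.exp_add s 0.6
  -- log n bound
  have hlogn : Real.log n ≤ 0.694 + 3*L + 2*D := by
    have h1 : Real.log n ≤ Real.log (2*((c*k)*(k:ℝ)^2)) := by
      apply Real.log_le_log hnR0
      have : 2*((c*k)*(k:ℝ)^2) = 2*(c*(k:ℝ)^3) := by ring
      rw [this]
      exact hn2ck3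
    rw [Real.log_mul (by norm_num) (by positivity),
        Real.log_mul (by positivity) (by positivity), Real.log_pow] at h1
    have hlogk : Real.log k ≤ L + D := by
      have e1 : Real.log (c*k) = Real.log c + Real.log k := Real.log_mul hc.ne' hk0.ne'
      have e2 : Real.log c⁻¹ ≤ D := Real.log_le_log (by positivity) hdc
      rw [Real.log_inv] at e2
      rw [hLdef]
      linarith
    have hlog2 : Real.log 2 ≤ 0.694 := by
      linarith [Real.log_two_lt_d9]
    push_cast at h1
    linarith
  have hE1 : (1:ℝ) ≤ Real.exp s := Real.one_le_exp hs0.le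
  have hkey : (k:ℝ) * Real.log n * Real.exp 0.6 + 1 ≤ 6 * (k:ℝ) * L := by
    have p1 : (k:ℝ) * Real.log n * Real.exp 0.6 ≤ (k:ℝ) * (0.694 + 3*L + 2*D) * 1.83 := by
      apply mul_le_mul _ he06 (Real.exp_pos _).le _
      · exact mul_le_mul_of_nonneg_left hlogn hk0.le
      · apply mul_nonneg hk0.le
        linarith
    linarith [mul_le_mul_of_nonneg_left hL hk0.le, mul_nonneg hk0.le hD0]
  calc (F.card : ℝ) ≤ (t:ℝ) := hcard
    _ ≤ y + 1 := ht_ub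
    _ ≤ (k:ℝ) * Real.log n * Real.exp (s+0.6) + 1 := by linarith
    _ = Real.exp s * ((k:ℝ) * Real.log n * Real.exp 0.6) + 1 := by
        rw [hexpadd]; ring
    _ ≤ Real.exp s * ((k:ℝ) * Real.log n * Real.exp 0.6 + 1) := by
        have e1 : Real.exp s * ((k:ℝ) * Real.log n * Real.exp 0.6 + 1)
            = Real.exp s * ((k:ℝ) * Real.log n * Real.exp 0.6) + Real.exp s := by ring
        rw [e1]
        linarith
    _ ≤ Real.exp s * (6 * (k:ℝ) * L) := by
        apply mul_le_mul_of_nonneg_left hkey (Real.exp_pos _).le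
    _ = 6 * (k:ℝ) * Real.exp s * L := by ring
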